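/- For every odd positive integer n, Ω_n(0) = 1 or Ω_n(0) = -1, where Ω_1(x) = x - 1 and for d ≥ 2, Ω_d(x) = ∏_{1 ≤ k ≤ d/2, gcd(k,d)=1} 2(x - cos(2kπ/d)). -/

import Mathlib

open Polynomial Polynomial.Chebyshev

section OmegaAux
open Finset

lemma cyclo_neg_one : ∀ n : ℕ, 1 < n → Odd n → (cyclotomic n ℂ).eval (-1) = 1 := by
  intro n
  induction n using Nat.strong_induction_on with
  | _ n IH =>
    intro h1 hodd
    have hpos : 0 < n := by omega
    have key := congrArg (eval (-1 : ℂ)) (prod_cyclotomic_eq_X_pow_sub_one hpos ℂ)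
    rw [eval_prod, eval_sub, eval_pow, eval_X, eval_one, hodd.neg_one_pow] at key
    have h1mem : 1 ∈ n.divisors := Nat.one_mem_divisors.mpr hpos.ne'
    have hnmem : n ∈ n.divisors.erase 1 := by
      simp [Nat.mem_divisors, hpos.ne', h1.ne']
    rw [← Finset.prod_erase_mul _ _ h1mem, cyclotomic_one, eval_sub, eval_X, eval_one,
      ← Finset.prod_erase_mul _ _ hnmem] at key
    have hrest : ∏ d ∈ (n.divisors.erase 1).erase n, (cyclotomic d ℂ).eval (-1) = 1 := by
      apply Finset.prod_eq_one
      intro d hd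
      have hd1 : d ≠ n := (Finset.mem_erase.mp hd).1
      have hd2 : d ≠ 1 := (Finset.mem_erase.mp (Finset.mem_erase.mp hd).2).1
      have hdvd : d ∣ n := (Nat.mem_divisors.mp (Finset.mem_erase.mp (Finset.mem_erase.mp hd).2).2).1
      have hdlt : d < n := lt_of_le_of_ne (Nat.le_of_dvd hpos hdvd) hd1
      have hdodd : Odd d := by
        rcases hdvd with ⟨c, rfl⟩
        rcases Nat.even_or_odd d with he | ho
        · exact absurd (he.mul_right c) (Nat.not_even_iff_odd.mpr hodd)
        · exact ho
      have hdpos : 1 < d := by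
        rcases Nat.lt_or_ge d 2 with h | h
        · interval_cases d <;> simp_all
        · omega
      exact IH d hdlt hdpos hdodd
    rw [hrest, one_mul] at key
    have : ((cyclotomic n ℂ).eval (-1)) * (-1 - 1) = -1 - 1 := by linear_combination key
    have h2 : (-1 - 1 : ℂ) ≠ 0 := by norm_num
    field_simp at this
    exact this

lemma prod_prim (n : ℕ) (h1 : 1 < n) (hodd : Odd n) :
    ∏ z ∈ primitiveRoots n ℂ, (z + z⁻¹) = 1 := by
  have hn2 : 2 < n := by rcases hodd with ⟨k, rfl⟩; omega
  have hpos : 0 < n := by omega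
  have hζ : IsPrimitiveRoot (Complex.exp (2 * Real.pi * Complex.I / n)) n :=
    Complex.isPrimitiveRoot_exp n hpos.ne'
  have hcard : (primitiveRoots n ℂ).card = n.totient := hζ.card_primitiveRoots
  have heven : Even (primitiveRoots n ℂ).card := hcard ▸ Nat.totient_even hn2
  have hmem : ∀ z ∈ primitiveRoots n ℂ, IsPrimitiveRoot z n :=
    fun z hz => (mem_primitiveRoots hpos).1 hz
  have hcyc := cyclotomic_eq_prod_X_sub_primitiveRoots hζ
  have hneg : ∀ f : ℂ → ℂ, ∏ x ∈ primitiveRoots n ℂ, -f x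
      = (-1) ^ (primitiveRoots n ℂ).card * ∏ x ∈ primitiveRoots n ℂ, f x := by
    intro f
    rw [← Finset.prod_const, ← Finset.prod_mul_distrib]
    simp
  -- product of roots is 1
  have hprodz : ∏ z ∈ primitiveRoots n ℂ, z = 1 := by
    have h0 := congrArg (eval (0 : ℂ)) hcyc
    rw [← coeff_zero_eq_eval_zero, cyclotomic_coeff_zero ℂ h1, eval_prod] at h0
    simp only [eval_sub, eval_X, eval_C, zero_sub] at h0
    rw [hneg, heven.neg_one_pow, one_mul] at h0
    exact h0.symm
  -- product of (1 + z) is 1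
  have hprod1z : ∏ z ∈ primitiveRoots n ℂ, (1 + z) = 1 := by
    have h0 := congrArg (eval (-1 : ℂ)) hcyc
    rw [cyclo_neg_one n h1 hodd, eval_prod] at h0
    simp only [eval_sub, eval_X, eval_C] at h0
    have : ∀ z ∈ primitiveRoots n ℂ, (-1 - z : ℂ) = -(1 + z) := by intros; ring
    rw [Finset.prod_congr rfl this, hneg, heven.neg_one_pow, one_mul] at h0
    exact h0.symm
  -- squaring is a bijection
  set m := (n + 1) / 2 with hm
  obtain ⟨kk, hkk⟩ := hodd
  have h2m : 2 * m = n + 1 := by omega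
  have hcm : Nat.Coprime m n := by
    have hd1 : Nat.gcd m n ∣ n + 1 := by
      rw [← h2m]; exact (Nat.gcd_dvd_left m n).mul_left 2
    have hd2 := Nat.gcd_dvd_right m n
    have : Nat.gcd m n ∣ 1 := by
      have := Nat.dvd_sub hd1 hd2; simpa using this
    exact Nat.dvd_one.mp this
  have hretr : ∀ z ∈ primitiveRoots n ℂ, (z ^ 2) ^ m = z := by
    intro z hz
    rw [← pow_mul, h2m, pow_succ, (hmem z hz).pow_eq_one, one_mul]
  have hsq : ∏ z ∈ primitiveRoots n ℂ, (1 + z ^ 2) = ∏ z ∈ primitiveRoots n ℂ, (1 + z) := by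
    refine Finset.prod_nbij (fun z => z ^ 2) ?_ ?_ ?_ ?_
    · intro z hz
      exact (mem_primitiveRoots hpos).2 ((hmem z hz).pow_of_coprime 2 (Nat.coprime_two_left.2 ⟨kk, hkk⟩))
    · intro z hz w hw h
      simp only at h
      have := hretr z hz
      rw [h, hretr w hw] at this
      exact this.symm
    · intro w hw
      refine ⟨w ^ m, ?_, ?_⟩
      · exact (mem_primitiveRoots hpos).2 (((mem_primitiveRoots hpos).1 hw).pow_of_coprime m hcm)
      · simp only [← pow_mul]
        rw [mul_comm m 2, pow_mul]
        exact hretr w hw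
    · intros; rfl
  -- combine
  have hcongr : ∀ z ∈ primitiveRoots n ℂ, z + z⁻¹ = z⁻¹ * (1 + z ^ 2) := by
    intro z hz
    have hz0 : z ≠ 0 := (hmem z hz).ne_zero hpos.ne'
    field_simp
    ring
  rw [Finset.prod_congr rfl hcongr, Finset.prod_mul_distrib, Finset.prod_inv_distrib,
    hprodz, hsq, hprod1z]
  norm_num

end OmegaAux

noncomputable def Omega (d : ℕ) : Polynomial ℝ :=
  if d = 1 then Polynomial.X - 1
  else ∏ k ∈ (Finset.range (d + 1)).filter (fun k => 1 ≤ k ∧ 2 * k ≤ d ∧ Nat.gcd k d = 1),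
    (Polynomial.C 2 * (Polynomial.X - Polynomial.C (Real.cos (2 * k * Real.pi / d))))

theorem omega_eval_zero_of_odd (n : ℕ) (hn : 0 < n) (hodd : Odd n) :
    (Omega n).eval 0 = 1 ∨ (Omega n).eval 0 = -1 := by
  rcases eq_or_lt_of_le (show 1 ≤ n from hn) with h1 | h1
  · right
    rw [Omega, if_pos h1.symm]
    simp
  -- n ≥ 2, and odd so n ≥ 3
  have h2 : 1 < n := h1
  have hn3 : 2 < n := by rcases hodd with ⟨k, rfl⟩; omega
  have hpos : 0 < n := hn
  have hnR : (n : ℝ) ≠ 0 := Nat.cast_ne_zero.mpr hpos.ne'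
  set S := (Finset.range (n + 1)).filter (fun k => 1 ≤ k ∧ 2 * k ≤ n ∧ Nat.gcd k n = 1) with hS
  set c : ℕ → ℝ := fun k => 2 * Real.cos (2 * k * Real.pi / n) with hc
  have heval : (Omega n).eval 0 = ∏ k ∈ S, (-(c k)) := by
    rw [Omega, if_neg h2.ne', eval_prod]
    refine Finset.prod_congr rfl fun k _ => ?_
    simp [hc]
  rw [heval]
  rw [← mul_self_eq_one_iff]
  -- square
  rw [← Finset.prod_mul_distrib]
  have hsq1 : ∀ k ∈ S, (-(c k)) * (-(c k)) = c k * c k := by intros; ring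
  rw [Finset.prod_congr rfl hsq1, Finset.prod_mul_distrib]
  -- the union
  set U := (Finset.range n).filter (fun k => 1 ≤ k ∧ Nat.gcd k n = 1) with hU
  set T := S.image (fun k => n - k) with hT
  have hgcd_sub : ∀ k, k ≤ n → Nat.gcd (n - k) n = Nat.gcd k n := by
    intro k hk
    calc Nat.gcd (n-k) n = Nat.gcd (n-k) (k + (n-k)) := by rw [Nat.add_sub_cancel' hk]
    _ = Nat.gcd (n-k) k := Nat.gcd_add_self_right _ _
    _ = Nat.gcd n k := Nat.gcd_sub_self_left hk
    _ = Nat.gcd k n := Nat.gcd_comm _ _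
  have hmemS : ∀ k, k ∈ S ↔ 1 ≤ k ∧ 2 * k ≤ n ∧ Nat.gcd k n = 1 := by
    intro k
    simp only [hS, Finset.mem_filter, Finset.mem_range]
    constructor
    · rintro ⟨_, h⟩; exact h
    · rintro ⟨ha, hb, hc'⟩; exact ⟨by omega, ha, hb, hc'⟩
  have hUeq : U = S ∪ T := by
    ext k
    simp only [hU, hT, Finset.mem_union, Finset.mem_image, Finset.mem_filter, Finset.mem_range]
    constructor
    · rintro ⟨hlt, h1k, hg⟩
      rcases Nat.lt_or_ge (2 * k) n with h | h
      · exact Or.inl ((hmemS k).2 ⟨h1k, by omega, hg⟩)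
      · refine Or.inr ⟨n - k, (hmemS _).2 ⟨by omega, by omega, ?_⟩, by omega⟩
        rw [hgcd_sub _ (by omega)]; exact hg
    · rintro (hk | ⟨j, hj, rfl⟩)
      · obtain ⟨h1k, h2k, hg⟩ := (hmemS k).1 hk
        have : 2 * k ≠ n := by rcases hodd with ⟨t, rfl⟩; omega
        exact ⟨by omega, h1k, hg⟩
      · obtain ⟨h1j, h2j, hg⟩ := (hmemS j).1 hj
        have : 2 * j ≠ n := by rcases hodd with ⟨t, rfl⟩; omega
        refine ⟨by omega, by omega, ?_⟩
        rw [hgcd_sub _ (by omega)]; exact hg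
  have hdisj : Disjoint S T := by
    rw [Finset.disjoint_left]
    rintro k hk hkT
    simp only [hT, Finset.mem_image] at hkT
    obtain ⟨j, hj, rfl⟩ := hkT
    obtain ⟨h1j, h2j, -⟩ := (hmemS j).1 hj
    obtain ⟨h1k, h2k, -⟩ := (hmemS _).1 hk
    have : 2 * j ≠ n := by rcases hodd with ⟨t, rfl⟩; omega
    omega
  have hprodT : ∏ k ∈ T, c k = ∏ k ∈ S, c k := by
    rw [hT, Finset.prod_image]
    · refine Finset.prod_congr rfl fun k hk => ?_
      obtain ⟨h1k, h2k, -⟩ := (hmemS k).1 hk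
      have hkn : (k : ℝ) ≤ n := by exact_mod_cast Nat.le_of_lt (by omega)
      have hcast : ((n - k : ℕ) : ℝ) = (n : ℝ) - k := by
        rw [Nat.cast_sub (by omega)]
      simp only [hc, hcast]
      congr 1
      rw [show 2 * ((n:ℝ) - k) * Real.pi / n = 2 * Real.pi - 2 * k * Real.pi / n by field_simp,
        Real.cos_two_pi_sub]
    · intro a ha b hb hab
      obtain ⟨h1a, h2a, -⟩ := (hmemS a).1 ha
      obtain ⟨h1b, h2b, -⟩ := (hmemS b).1 hb
      simp only at hab
      omega
  have hmain : ∏ k ∈ U, c k = 1 := by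
    -- pass to ℂ
    have hcomplex : ((∏ k ∈ U, c k : ℝ) : ℂ) = 1 := by
      rw [Complex.ofReal_prod]
      set ζ : ℂ := Complex.exp (2 * Real.pi * Complex.I / n) with hζdef
      have hζ : IsPrimitiveRoot ζ n := Complex.isPrimitiveRoot_exp n hpos.ne'
      have hnC : (n : ℂ) ≠ 0 := Nat.cast_ne_zero.mpr hpos.ne'
      have : NeZero n := ⟨hpos.ne'⟩
      have hval : ∀ k : ℕ, ((c k : ℝ) : ℂ) = ζ ^ k + (ζ ^ k)⁻¹ := by
        intro k
        rw [← Complex.exp_nat_mul, ← Complex.exp_neg]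
        have harg : (k : ℂ) * (2 * Real.pi * Complex.I / n)
            = ((2 * k * Real.pi / n : ℝ) : ℂ) * Complex.I := by
          push_cast; field_simp
        rw [harg, Complex.exp_mul_I, ← neg_mul, Complex.exp_mul_I, Complex.cos_neg,
          Complex.sin_neg]
        simp only [hc]
        push_cast [Complex.ofReal_cos]
        ring
      rw [Finset.prod_congr rfl fun k _ => hval k]
      rw [← prod_prim n h2 hodd]
      refine Finset.prod_nbij (fun k => ζ ^ k) ?_ ?_ ?_ ?_
      · intro k hk
        simp only [hU, Finset.mem_filter, Finset.mem_range] at hk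
        exact (mem_primitiveRoots hpos).2 (hζ.pow_of_coprime k hk.2.2)
      · intro a ha b hb hab
        simp only [hU, Finset.mem_coe, Finset.mem_filter, Finset.mem_range] at ha hb
        exact hζ.pow_inj ha.1 hb.1 hab
      · intro z hz
        simp only [Finset.mem_coe] at hz
        have hzprim := (mem_primitiveRoots hpos).1 hz
        obtain ⟨i, hilt, rfl⟩ := hζ.eq_pow_of_pow_eq_one hzprim.pow_eq_one
        have hicop : Nat.Coprime i n := (hζ.pow_iff_coprime hpos i).1 hzprim
        have hi1 : 1 ≤ i := by
          rcases Nat.eq_zero_or_pos i with rfl | h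
          · exfalso
            rw [pow_zero] at hzprim
            exact h2.ne' (hzprim.unique IsPrimitiveRoot.one)
          · exact h
        refine ⟨i, ?_, rfl⟩
        simp only [hU, Finset.mem_coe, Finset.mem_filter, Finset.mem_range]
        exact ⟨hilt, hi1, hicop⟩
      · intros; rfl
    exact Complex.ofReal_eq_one.mp hcomplex
  rw [hUeq, Finset.prod_union hdisj, hprodT] at hmain
  exact hmain
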